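/- Let X be a locally compact Polish space, Y a Hausdorff space, f : X → Y a continuous bijection, and Z as above. Then Y₁ := Y \ Z, with the subspace topology, is the continuous bijective image of a locally compact Polish space; namely X₁ := f⁻¹(Y₁), with the subspace topology of X, is a locally compact Polish space and the restriction of f to X₁ is a continuous bijection onto Y₁. -/

import Mathlib

theorem stmt_9 {X Y : Type*} [TopologicalSpace X] [PolishSpace X]
    [LocallyCompactSpace X] [TopologicalSpace Y] [T2Space Y]
    (f : X → Y) (hf : Continuous f) (hbij : Function.Bijective f)
    (Z : Set Y)
    (hZ : Z = {y : Y | ∃ C : Set Y, IsOpen C ∧ y ∈ C ∧ IsCompact (closure (f ⁻¹' C))}) :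
    PolishSpace (f ⁻¹' Zᶜ) ∧ LocallyCompactSpace (f ⁻¹' Zᶜ) ∧
      ∃ g : (f ⁻¹' Zᶜ) → (Zᶜ : Set Y), (∀ x : f ⁻¹' Zᶜ, (g x : Y) = f x) ∧
        Continuous g ∧ Function.Bijective g := by
  have hZopen : IsOpen Z := by
    rw [isOpen_iff_forall_mem_open]
    intro y hy
    rw [hZ] at hy
    obtain ⟨C, hCopen, hyC, hCcomp⟩ := hy
    refine ⟨C, ?_, hCopen, hyC⟩
    intro y' hy'
    rw [hZ]
    exact ⟨C, hCopen, hy', hCcomp⟩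
  have hclosed : IsClosed (f ⁻¹' Zᶜ) := (hZopen.isClosed_compl).preimage hf
  have hT2 : T2Space X := inferInstance
  refine ⟨hclosed.polishSpace, hclosed.locallyCompactSpace, ?_⟩
  refine ⟨fun x => ⟨f x, x.2⟩, fun x => rfl, ?_, ?_, ?_⟩
  · exact Continuous.subtype_mk (hf.comp continuous_subtype_val) _
  · intro a b hab
    exact Subtype.ext (hbij.1 (congrArg Subtype.val hab))
  · rintro ⟨y, hy⟩
    obtain ⟨x, hx⟩ := hbij.2 y
    exact ⟨⟨x, by simp only [Set.mem_preimage, hx]; exact hy⟩, Subtype.ext hx⟩
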